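/- Let μ : A^S → A with e ∈ S and |S| ≥ 2. If |A| does not divide α(μ), then the minimal neighborhood of μ is all of S (every element of S is essential for μ). -/

import Mathlib

/-- If `|A|` does not divide `α(μ)` and `|S| ≥ 2`, then every element of `S`
is essential for `μ`, i.e. the minimal neighborhood of `μ` is `S`. -/
theorem stmt10 (A S : Type*) [Fintype A] [Fintype S] [DecidableEq S]
    (hA : 2 ≤ Fintype.card A) (hS : 2 ≤ Fintype.card S) (e : S)
    (μ : (S → A) → A)
    (hdvd : ¬ (Fintype.card A ∣ Nat.card {z : S → A // μ z ≠ z e})) :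
    ∀ s : S, ∃ z w : S → A, (∀ t, t ≠ s → z t = w t) ∧ μ z ≠ μ w := by
  classical
  intro s
  by_contra hcon
  push_neg at hcon
  -- hcon : ∀ z w, (∀ t ≠ s, z t = w t) → μ z = μ w
  apply hdvd
  have hAne : Nonempty A := Fintype.card_pos_iff.mp (lt_of_lt_of_le two_pos hA)
  obtain ⟨a₀⟩ := hAne
  set B := ({t : S // t ≠ s} → A) with hB
  let g : B → A → (S → A) := fun f a t => if ht : t = s then a else f ⟨t, ht⟩
  let r : (S → A) → B := fun z t => z t.1
  have hgr : ∀ z a, μ z = μ (g (r z) a) := by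
    intro z a
    apply hcon
    intro t ht
    simp only [g, r, dif_neg ht]
  have hgg : ∀ f a a', μ (g f a) = μ (g f a') := by
    intro f a a'
    apply hcon
    intro t ht
    simp only [g, dif_neg ht]
  have hleft : ∀ z : S → A, g (r z) (z s) = z := by
    intro z; funext t
    by_cases ht : t = s
    · subst ht; simp [g]
    · simp [g, r, dif_neg ht]
  have hrB : ∀ f a, r (g f a) = f := by
    intro f a; funext t
    simp [g, r, dif_neg t.2]
  by_cases hse : s = e
  · subst hse
    let c : B → A := fun f => μ (g f a₀)
    let E : {z : S → A // μ z ≠ z s} ≃ Σ f : B, {a : A // c f ≠ a} :=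
      { toFun := fun z => ⟨r z.1, z.1 s, by
          have : c (r z.1) = μ z.1 := (hgr z.1 a₀).symm
          rw [this]; exact z.2⟩
        invFun := fun p => ⟨g p.1 p.2.1, by
          have h1 : μ (g p.1 p.2.1) = c p.1 := hgg p.1 p.2.1 a₀
          have h2 : g p.1 p.2.1 s = p.2.1 := by simp [g]
          rw [h1, h2]; exact p.2.2⟩
        left_inv := fun z => Subtype.ext (hleft z.1)
        right_inv := fun p => by
          rcases p with ⟨f, a, ha⟩
          exact Sigma.subtype_ext (hrB f a) (by simp [g]) }
    rw [Nat.card_congr E, Nat.card_eq_fintype_card, Fintype.card_sigma]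
    have hcard : ∀ f : B, Fintype.card {a : A // c f ≠ a} = Fintype.card A - 1 := by
      intro f
      rw [Fintype.card_subtype_compl (fun a => c f = a), Fintype.card_subtype_eq' (c f)]
    simp only [hcard, Finset.sum_const, smul_eq_mul]
    have hBcard : Fintype.card B = Fintype.card A ^ (Fintype.card S - 1) := by
      rw [Fintype.card_fun]
      congr 1
      rw [Fintype.card_subtype_compl (fun t => t = s), Fintype.card_subtype_eq s]
    rw [Finset.card_univ, hBcard]
    exact Dvd.dvd.mul_right
      (dvd_pow_self (Fintype.card A) (Nat.sub_ne_zero_of_lt hS)) _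
  · have hes : e ≠ s := fun h => hse h.symm
    let Q : B → Prop := fun f => μ (g f a₀) ≠ f ⟨e, hes⟩
    have hge : ∀ f a, g f a e = f ⟨e, hes⟩ := by
      intro f a; simp [g, dif_neg hes]
    let E : {z : S → A // μ z ≠ z e} ≃ A × {f : B // Q f} :=
      { toFun := fun z => (z.1 s, ⟨r z.1, by
          show μ (g (r z.1) a₀) ≠ (r z.1) ⟨e, hes⟩
          rw [← hgr z.1 a₀]
          exact z.2⟩)
        invFun := fun p => ⟨g p.2.1 p.1, by
          rw [hgg p.2.1 p.1 a₀, hge]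
          exact p.2.2⟩
        left_inv := fun z => Subtype.ext (hleft z.1)
        right_inv := fun p => by
          have h1 : g p.2.1 p.1 s = p.1 := by simp [g]
          refine Prod.ext h1 (Subtype.ext (hrB p.2.1 p.1)) }
    rw [Nat.card_congr E, Nat.card_eq_fintype_card, Fintype.card_prod]
    exact Dvd.intro _ rfl
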